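/- Let a, b be elements of a complex Hilbert space with ‖a‖ < 1 and 0 < ‖b‖ < 1. Then |1 - ⟨a, b/‖b‖⟩| ≤ 2 |1 - ⟨a,b⟩|. -/

import Mathlib

theorem stmt15 {E : Type*} [NormedAddCommGroup E] [InnerProductSpace ℂ E]
    (a b : E) (ha : ‖a‖ < 1) (hb0 : 0 < ‖b‖) (hb : ‖b‖ < 1) :
    ‖(1 - (inner ℂ ((‖b‖⁻¹ : ℝ) • b) a : ℂ))‖ ≤
      2 * ‖(1 - (inner ℂ b a : ℂ))‖ := by
  set z : ℂ := inner ℂ b a with hz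
  have hsmul : (inner ℂ ((‖b‖⁻¹ : ℝ) • b) a : ℂ) = (‖b‖⁻¹ : ℝ) * z := by
    rw [show ((‖b‖⁻¹ : ℝ) • b) = (((‖b‖⁻¹ : ℝ) : ℂ) • b) from (Complex.coe_smul _ _).symm,
      inner_smul_left]
    simp [hz]
  rw [hsmul]
  have hzb : ‖z‖ ≤ ‖b‖ := by
    calc ‖z‖ = ‖z‖ := rfl
      _ ≤ ‖b‖ * ‖a‖ := norm_inner_le_norm b a
      _ ≤ ‖b‖ * 1 := by nlinarith
      _ = ‖b‖ := mul_one _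
  have h1 : 1 - ‖b‖ ≤ ‖1 - z‖ := by
    have h : (1:ℝ) ≤ ‖z‖ + ‖1 - z‖ := by
      have := norm_add_le z (1 - z)
      simpa using this
    linarith
  have key : ‖1 - (‖b‖⁻¹ : ℝ) * z‖ ≤
      ‖1 - z‖ + ‖z - (‖b‖⁻¹ : ℝ) * z‖ := by
    calc ‖1 - (‖b‖⁻¹ : ℝ) * z‖
        = ‖(1 - z) + (z - (‖b‖⁻¹ : ℝ) * z)‖ := by ring_nf
      _ ≤ _ := norm_add_le _ _
  have h2 : ‖z - (‖b‖⁻¹ : ℝ) * z‖ ≤ 1 - ‖b‖ := by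
    have : ‖z - (‖b‖⁻¹ : ℝ) * z‖ = |1 - ‖b‖⁻¹| * ‖z‖ := by
      rw [show z - (‖b‖⁻¹ : ℝ) * z = ((1 - ‖b‖⁻¹ : ℝ) : ℂ) * z by push_cast; ring,
        norm_mul, Complex.norm_real, Real.norm_eq_abs]
    rw [this]
    have hinv : (1:ℝ) ≤ ‖b‖⁻¹ := one_le_inv₀ hb0 |>.mpr hb.le
    rw [abs_of_nonpos (by linarith)]
    have : (‖b‖⁻¹ - 1) * ‖z‖ ≤ (‖b‖⁻¹ - 1) * ‖b‖ := by
      apply mul_le_mul_of_nonneg_left hzb; linarith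
    have hb' : (‖b‖⁻¹ - 1) * ‖b‖ = 1 - ‖b‖ := by field_simp
    linarith [this, hb'.le]
  linarith [key, h2, h1]
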